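/- Let k ∈ L¹(𝕋)\L²(𝕋) be a convolution kernel on the circle whose Fourier coefficients satisfy |k̂[n]| ≥ (|n|+1)^{-ρ} for all n ∈ ℤ, with 0 < ρ < 1/2, and let T^{Tikh}_α be the Tikhonov regularizer of the convolution operator Ax = k*x on L²(𝕋) (diagonal in the Fourier basis). Then the functions r_N = Σ_{|n|≤N} (|n|+1)^{−(1−ρ)} u_n (where u_n are the left singular vectors) are uniformly bounded in L²(𝕋), while (T^{Tikh}_α r_N)(0) ≥ (σ_max² + α)^{-1} Σ_{|n|≤N} (|n|+1)^{-1} → ∞ as N → ∞. Hence T^{Tikh}_α is not bounded from L²(𝕋) to L^∞(𝕋). -/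

import Mathlib

open MeasureTheory AddCircle
open scoped ENNReal

lemma aux_essSup_stmt19 (f : AddCircle (1:ℝ) → ℂ) (hf : Continuous f) (x₀ : AddCircle (1:ℝ)) :
    ENNReal.ofReal ‖f x₀‖ ≤ eLpNormEssSup f (haarAddCircle (T := 1)) := by
  by_contra h
  push_neg at h
  have hE : eLpNormEssSup f (haarAddCircle (T := 1)) ≠ ⊤ := (h.trans_le le_top).ne
  have ht : (eLpNormEssSup f (haarAddCircle (T := 1))).toReal < ‖f x₀‖ := by
    have := (ENNReal.toReal_lt_toReal hE ENNReal.ofReal_ne_top).2 h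
    rwa [ENNReal.toReal_ofReal (norm_nonneg _)] at this
  set E := eLpNormEssSup f (haarAddCircle (T := 1)) with hEdef
  have hU : IsOpen {x | E.toReal < ‖f x‖} := isOpen_lt continuous_const hf.norm
  have hpos : 0 < haarAddCircle (T := 1) {x | E.toReal < ‖f x‖} :=
    hU.measure_pos _ ⟨x₀, ht⟩
  have hae := ae_le_eLpNormEssSup (f := f) (μ := haarAddCircle (T := 1))
  rw [MeasureTheory.ae_iff] at hae
  have hsub : {x | E.toReal < ‖f x‖} ⊆ {x | ¬ ((‖f x‖₊ : ℝ≥0∞) ≤ E)} := by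
    intro x hx
    simp only [Set.mem_setOf_eq, not_le]
    have h2 : E.toReal < ((‖f x‖₊ : ℝ≥0∞)).toReal := by simpa [coe_nnnorm] using hx
    exact (ENNReal.toReal_lt_toReal hE ENNReal.coe_ne_top).1 h2
  exact hpos.ne' (measure_mono_null hsub hae)

lemma aux_harmonic_stmt19 (N : ℕ) : ∑ i ∈ Finset.range (N+1), ((i:ℝ)+1)⁻¹ ≤
    ∑ n ∈ Finset.Icc (-(N:ℤ)) (N:ℤ), ((|n|:ℝ)+1)⁻¹ := by
  have heq : ∑ n ∈ (Finset.range (N+1)).image (Nat.cast : ℕ → ℤ), ((|n|:ℝ)+1)⁻¹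
      = ∑ i ∈ Finset.range (N+1), ((i:ℝ)+1)⁻¹ := by
    rw [Finset.sum_image (by intro x _ y _ h; exact_mod_cast h)]
    simp [Int.abs_natCast]
  rw [← heq]
  apply Finset.sum_le_sum_of_subset_of_nonneg
  · intro n hn
    simp only [Finset.mem_image, Finset.mem_range] at hn
    obtain ⟨i, hi, rfl⟩ := hn
    simp only [Finset.mem_Icc]
    exact ⟨le_trans (by simp) (Int.ofNat_nonneg i), by exact_mod_cast Nat.lt_succ_iff.1 hi⟩
  · intro n _ _; positivity

/-- for a periodic convolution kernel with Fourier coefficients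
`|k̂[n]| ≥ (|n|+1)^{-ρ}` (`0 < ρ < 1/2`) and `σ_n = |k̂[n]| ≤ σ_max`, the functions
`r_N = Σ_{|n|≤N} (|n|+1)^{-(1-ρ)} u_n` (where `u_n` are the left singular vectors,
orthonormal in `L²(𝕋)`) are uniformly bounded in `L²(𝕋)`, while the Tikhonov
reconstructions `g_N = T^{Tikh}_α r_N = Σ_{|n|≤N} (σ_n/(σ_n²+α))(|n|+1)^{-(1-ρ)} e^{2πin·}`
satisfy `(g_N)(0) ≥ (σ_max²+α)^{-1} Σ_{|n|≤N} (|n|+1)^{-1} → ∞`; hence their `L^∞`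
norms blow up and `T^{Tikh}_α` is not bounded from `L²(𝕋)` to `L^∞(𝕋)`. -/
theorem stmt19
    (ρ : ℝ) (hρ0 : 0 < ρ) (hρ : ρ < 1 / 2)
    (khat : ℤ → ℂ) (hk : ∀ n, khat n ≠ 0)
    (hlow : ∀ n : ℤ, ((|n| : ℝ) + 1) ^ (-ρ) ≤ ‖khat n‖)
    (σmax : ℝ) (hmax : ∀ n : ℤ, ‖khat n‖ ≤ σmax)
    (α : ℝ) (hα : 0 < α)
    (u : ℤ → Lp ℂ 2 (haarAddCircle (T := 1))) (hu : Orthonormal ℂ u)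
    (r : ℕ → Lp ℂ 2 (haarAddCircle (T := 1)))
    (hr : ∀ N : ℕ, r N = ∑ n ∈ Finset.Icc (-(N : ℤ)) (N : ℤ),
      ((((|n| : ℝ) + 1) ^ (-(1 - ρ)) : ℝ) : ℂ) • u n)
    (g : ℕ → AddCircle (1 : ℝ) → ℂ)
    (hg : ∀ N : ℕ, g N = fun x => ∑ n ∈ Finset.Icc (-(N : ℤ)) (N : ℤ),
      (((‖khat n‖ / (‖khat n‖ ^ 2 + α) *
          ((|n| : ℝ) + 1) ^ (-(1 - ρ)) : ℝ)) : ℂ) * fourier n x) :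
    -- the r_N are uniformly bounded in L²(𝕋)
    (∃ Mb : ℝ, ∀ N, ‖r N‖ ≤ Mb) ∧
    -- adversarial artifact at 0
    (∀ N : ℕ, (σmax ^ 2 + α)⁻¹ *
        ∑ n ∈ Finset.Icc (-(N : ℤ)) (N : ℤ), ((|n| : ℝ) + 1)⁻¹ ≤ (g N 0).re) ∧
    -- the harmonic lower bound diverges
    Filter.Tendsto
      (fun N : ℕ => ∑ n ∈ Finset.Icc (-(N : ℤ)) (N : ℤ), ((|n| : ℝ) + 1)⁻¹)
      Filter.atTop Filter.atTop ∧
    -- hence the L^∞ norms of the reconstructions g_N blow up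
    (∀ C : ℝ≥0∞, C ≠ ⊤ → ∃ N, C < eLpNorm (g N) ⊤ (haarAddCircle (T := 1))) ∧
    -- and the Tikhonov regularizer is not bounded from L²(𝕋) to L^∞(𝕋)
    (∀ T : Lp ℂ 2 (haarAddCircle (T := 1)) → AddCircle (1 : ℝ) → ℂ,
      (∀ N, T (r N) =ᵐ[haarAddCircle (T := 1)] g N) →
      ¬ ∃ Cb : ℝ, ∀ y, eLpNorm (T y) ⊤ (haarAddCircle (T := 1)) ≤
          ENNReal.ofReal (Cb * ‖y‖)) := by
  -- positivity facts
  have hσpos : ∀ n : ℤ, (0:ℝ) < ‖khat n‖ := fun n =>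
    lt_of_lt_of_le (Real.rpow_pos_of_pos (by positivity) _) (hlow n)
  have hσmax : (0:ℝ) < σmax := lt_of_lt_of_le (hσpos 0) (hmax 0)
  have hden : (0:ℝ) < σmax ^ 2 + α := by positivity
  -- Part 1 : uniform boundedness
  have hZ : Summable (fun n : ℤ => ((|n| : ℝ) + 1) ^ (-(2 - 2*ρ))) := by
    have hb : -(2 - 2*ρ) < -1 := by linarith
    have h0 : Summable (fun i : ℕ => ((i : ℝ)) ^ (-(2 - 2*ρ))) :=
      Real.summable_nat_rpow.2 hb
    have h1 : Summable (fun i : ℕ => ((i : ℝ) + 1) ^ (-(2 - 2*ρ))) := by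
      have := (summable_nat_add_iff (f := fun i : ℕ => ((i : ℝ)) ^ (-(2 - 2*ρ))) 1).2 h0
      simpa using this
    apply Summable.of_nat_of_neg <;> simpa [Int.abs_natCast] using h1
  have part1 : ∃ Mb : ℝ, ∀ N, ‖r N‖ ≤ Mb := by
    refine ⟨Real.sqrt (∑' n : ℤ, ((|n| : ℝ) + 1) ^ (-(2 - 2*ρ))), fun N => ?_⟩
    have hnorm : ‖r N‖ ^ 2 = ∑ n ∈ Finset.Icc (-(N : ℤ)) (N : ℤ),
        (((|n| : ℝ) + 1) ^ (-(1 - ρ))) ^ 2 := by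
      rw [hr N, @norm_sq_eq_re_inner ℂ, hu.inner_sum]
      simp [Complex.conj_ofReal, ← Complex.ofReal_mul, Complex.re_sum, sq]
    have hterm : ∀ n : ℤ, (((|n| : ℝ) + 1) ^ (-(1 - ρ))) ^ 2
        = ((|n| : ℝ) + 1) ^ (-(2 - 2*ρ)) := by
      intro n
      rw [← Real.rpow_natCast (((|n| : ℝ) + 1) ^ (-(1 - ρ))) 2,
        ← Real.rpow_mul (by positivity)]
      norm_num
      ring_nf
    have hle : ‖r N‖ ^ 2 ≤ ∑' n : ℤ, ((|n| : ℝ) + 1) ^ (-(2 - 2*ρ)) := by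
      rw [hnorm]
      simp_rw [hterm]
      exact Summable.sum_le_tsum _ (fun n _ => by positivity) hZ
    calc ‖r N‖ = Real.sqrt (‖r N‖ ^ 2) := (Real.sqrt_sq (norm_nonneg _)).symm
      _ ≤ _ := Real.sqrt_le_sqrt hle
  -- Part 2 : lower bound at 0
  have part2 : ∀ N : ℕ, (σmax ^ 2 + α)⁻¹ *
      ∑ n ∈ Finset.Icc (-(N : ℤ)) (N : ℤ), ((|n| : ℝ) + 1)⁻¹ ≤ (g N 0).re := by
    intro N
    rw [hg]
    simp only [fourier_eval_zero, mul_one, Complex.re_sum, Complex.ofReal_re,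
      Finset.mul_sum]
    apply Finset.sum_le_sum
    intro n _
    set a : ℝ := (|n| : ℝ) + 1 with hadef
    set σ : ℝ := ‖khat n‖ with hσdef
    have ha0 : (0:ℝ) < a := by positivity
    have hσ0 : (0:ℝ) < σ := hσpos n
    have hmul : a ^ (-ρ) * a ^ (-(1 - ρ)) = a⁻¹ := by
      rw [← Real.rpow_add ha0, ← Real.rpow_neg_one a]; ring_nf
    have key : a ^ (-ρ) / (σmax ^ 2 + α) ≤ σ / (σ ^ 2 + α) := by
      have h2 : σ ^ 2 + α ≤ σmax ^ 2 + α := by nlinarith [hmax n, hσ0.le]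
      calc a ^ (-ρ) / (σmax ^ 2 + α) ≤ σ / (σmax ^ 2 + α) := by
            gcongr; exact hlow n
        _ ≤ σ / (σ ^ 2 + α) := by gcongr
    calc (σmax ^ 2 + α)⁻¹ * a⁻¹ = a ^ (-ρ) / (σmax ^ 2 + α) * a ^ (-(1 - ρ)) := by
          rw [div_mul_eq_mul_div, hmul, inv_mul_eq_div]
      _ ≤ σ / (σ ^ 2 + α) * a ^ (-(1 - ρ)) :=
          mul_le_mul_of_nonneg_right key (Real.rpow_nonneg ha0.le _)
  -- Part 3 : divergence
  have part3 : Filter.Tendsto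
      (fun N : ℕ => ∑ n ∈ Finset.Icc (-(N : ℤ)) (N : ℤ), ((|n| : ℝ) + 1)⁻¹)
      Filter.atTop Filter.atTop := by
    have h1 : Filter.Tendsto
        (fun N : ℕ => ∑ i ∈ Finset.range (N+1), (1 / ((i:ℝ) + 1)))
        Filter.atTop Filter.atTop :=
      Real.tendsto_sum_range_one_div_nat_succ_atTop.comp (Filter.tendsto_add_atTop_nat 1)
    refine Filter.tendsto_atTop_mono (fun N => ?_) h1
    simpa [one_div] using aux_harmonic_stmt19 N
  -- Part 4 : L∞ blow-up
  have hcont : ∀ N, Continuous (g N) := by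
    intro N
    rw [hg]
    exact continuous_finset_sum _ fun n _ => continuous_const.mul (map_continuous (fourier n))
  have part4 : ∀ C : ℝ≥0∞, C ≠ ⊤ →
      ∃ N, C < eLpNorm (g N) ⊤ (haarAddCircle (T := 1)) := by
    intro C hC
    have htend : Filter.Tendsto
        (fun N : ℕ => (σmax ^ 2 + α)⁻¹ *
          ∑ n ∈ Finset.Icc (-(N : ℤ)) (N : ℤ), ((|n| : ℝ) + 1)⁻¹)
        Filter.atTop Filter.atTop :=
      part3.const_mul_atTop (by positivity)
    obtain ⟨N, hN⟩ := (htend.eventually_gt_atTop C.toReal).exists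
    refine ⟨N, ?_⟩
    have h1 : C.toReal < (g N 0).re := lt_of_lt_of_le hN (part2 N)
    have h2 : (g N 0).re ≤ ‖g N 0‖ := by
      exact Complex.re_le_norm _
    have h3 : ENNReal.ofReal ‖g N 0‖ ≤ eLpNorm (g N) ⊤ (haarAddCircle (T := 1)) := by
      rw [eLpNorm_exponent_top]
      exact aux_essSup_stmt19 (g N) (hcont N) 0
    have h4 : C < ENNReal.ofReal ‖g N 0‖ := by
      conv_lhs => rw [← ENNReal.ofReal_toReal hC]
      exact (ENNReal.ofReal_lt_ofReal_iff (lt_of_le_of_lt ENNReal.toReal_nonneg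
        (h1.trans_le h2))).2 (h1.trans_le h2)
    exact h4.trans_le h3
  refine ⟨part1, part2, part3, part4, ?_⟩
  -- Part 5 : unboundedness
  rintro T hT ⟨Cb, hCb⟩
  obtain ⟨Mb, hMb⟩ := part1
  have hMb0 : 0 ≤ Mb := le_trans (norm_nonneg (r 0)) (hMb 0)
  obtain ⟨N, hN⟩ := part4 (ENNReal.ofReal (|Cb| * Mb)) ENNReal.ofReal_ne_top
  have heq : eLpNorm (g N) ⊤ (haarAddCircle (T := 1))
      = eLpNorm (T (r N)) ⊤ (haarAddCircle (T := 1)) := (eLpNorm_congr_ae (hT N)).symm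
  have hle2 : Cb * ‖r N‖ ≤ |Cb| * Mb :=
    le_trans (mul_le_mul_of_nonneg_right (le_abs_self _) (norm_nonneg _))
      (mul_le_mul_of_nonneg_left (hMb N) (abs_nonneg _))
  have : eLpNorm (g N) ⊤ (haarAddCircle (T := 1)) ≤ ENNReal.ofReal (|Cb| * Mb) :=
    heq ▸ le_trans (hCb (r N)) (ENNReal.ofReal_le_ofReal hle2)
  exact absurd this (not_le.2 hN)
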